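/- Let p be a rational prime and let f(x) ∈ ℤ[x] be a monic polynomial (not necessarily irreducible) whose discriminant Disc(f) is relatively prime to p. Suppose the reduction f̅(x) ∈ 𝔽_p[x] factors as f̅ = f_1 ⋯ f_k with f_1, …, f_k ∈ 𝔽_p[x] irreducible. Then there exist lifts f̃_1, …, f̃_k ∈ ℤ[x] of f_1, …, f_k and a polynomial F(x) ∈ ℤ[x] such that f(x) = f̃_1(x) ⋯ f̃_k(x) + pF(x) and the resultant Res(f̃_i, F) is relatively prime to p for every 1 ≤ i ≤ k. -/

import Mathlib

open Polynomial

noncomputable section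

/-- The Sylvester matrix of two polynomials `f, g ∈ ℤ[x]`: the first `g.natDegree` rows
carry the coefficients of `f` and the remaining `f.natDegree` rows carry the
coefficients of `g`, each shifted one step to the right in successive rows. -/
def sylvesterMatrix (f g : Polynomial ℤ) :
    Matrix (Fin (f.natDegree + g.natDegree)) (Fin (f.natDegree + g.natDegree)) ℤ :=
  Matrix.of fun i j =>
    if (i : ℕ) < g.natDegree then
      if (i : ℕ) ≤ (j : ℕ) ∧ (j : ℕ) ≤ (i : ℕ) + f.natDegree then
        f.coeff (f.natDegree - ((j : ℕ) - (i : ℕ)))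
      else 0
    else
      if (i : ℕ) - g.natDegree ≤ (j : ℕ) ∧ (j : ℕ) ≤ ((i : ℕ) - g.natDegree) + g.natDegree then
        g.coeff (g.natDegree - ((j : ℕ) - ((i : ℕ) - g.natDegree)))
      else 0

/-- The resultant of two polynomials over `ℤ`, as the determinant of their Sylvester matrix. -/
def resultantZ (f g : Polynomial ℤ) : ℤ := (sylvesterMatrix f g).det

/-- The discriminant of a monic polynomial `f ∈ ℤ[x]`:
`Disc(f) = (-1)^{deg f (deg f - 1)/2} · Res(f, f')`. -/
def discZ (f : Polynomial ℤ) : ℤ :=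
  (-1) ^ (f.natDegree * (f.natDegree - 1) / 2) * resultantZ f (Polynomial.derivative f)

section Helpers

open Finset

variable {K : Type*} [Field K]

/-- auxiliary polynomial built from a coefficient vector, with reversed exponents -/
def Wpoly (c : ℕ → K) (n : ℕ) : K[X] :=
  ∑ i ∈ Finset.range n, C (c i) * X ^ (n - 1 - i)

lemma Wpoly_coeff_mul (c : ℕ → K) (n : ℕ) (q : K[X]) (m : ℕ) :
    (Wpoly c n * q).coeff m
      = ∑ i ∈ Finset.range n, c i * (if n - 1 - i ≤ m then q.coeff (m - (n - 1 - i)) else 0) := by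
  rw [Wpoly, Finset.sum_mul, finset_sum_coeff]
  refine Finset.sum_congr rfl fun i _ => ?_
  rw [mul_right_comm, coeff_mul_X_pow']
  split_ifs with h
  · rw [coeff_C_mul]
  · rw [mul_zero]

lemma Wpoly_coeff (c : ℕ → K) (n i0 : ℕ) (h : i0 < n) :
    (Wpoly c n).coeff (n - 1 - i0) = c i0 := by
  rw [Wpoly, finset_sum_coeff]
  rw [Finset.sum_eq_single i0]
  · simp
  · intro i hi hne
    simp only [coeff_C_mul, coeff_X_pow]
    rw [if_neg, mul_zero]
    simp only [Finset.mem_range] at hi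
    omega
  · intro h'; exact absurd (Finset.mem_range.mpr h) h'

lemma Wpoly_eq (u : K[X]) (n : ℕ) (h : u = 0 ∨ u.natDegree < n) :
    Wpoly (fun i => u.coeff (n - 1 - i)) n = u := by
  rcases h with h | h
  · subst h; simp [Wpoly]
  · rw [Wpoly]
    rw [show ∑ i ∈ Finset.range n, C (u.coeff (n - 1 - i)) * X ^ (n - 1 - i)
        = ∑ m ∈ Finset.range n, C (u.coeff m) * X ^ m from
      Finset.sum_nbij' (fun i => n - 1 - i) (fun m => n - 1 - m)
        (by intro a ha; simp only [Finset.mem_range] at *; omega)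
        (by intro a ha; simp only [Finset.mem_range] at *; omega)
        (by intro a ha; simp only [Finset.mem_range] at *; omega)
        (by intro a ha; simp only [Finset.mem_range] at *; omega)
        (by intro a ha; rfl)]
    conv_rhs => rw [u.as_sum_range' n h]
    refine Finset.sum_congr rfl fun m _ => ?_
    rw [C_mul_X_pow_eq_monomial]

/-! ### Sylvester matrix infrastructure -/

def sylvEntry (a b : Polynomial ℤ) (i j : ℕ) : ℤ :=
  if i < b.natDegree then
    if i ≤ j ∧ j ≤ i + a.natDegree then a.coeff (a.natDegree - (j - i)) else 0
  else
    if i - b.natDegree ≤ j ∧ j ≤ (i - b.natDegree) + b.natDegree then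
      b.coeff (b.natDegree - (j - (i - b.natDegree)))
    else 0

lemma sylv_apply (a b : Polynomial ℤ) (i j : Fin (a.natDegree + b.natDegree)) :
    sylvesterMatrix a b i j = sylvEntry a b i j := rfl

lemma Wpoly_congr (c₁ c₂ : ℕ → K) (n : ℕ) (h : ∀ i < n, c₁ i = c₂ i) :
    Wpoly c₁ n = Wpoly c₂ n := by
  unfold Wpoly
  exact Finset.sum_congr rfl fun i hi => by rw [h i (Finset.mem_range.mp hi)]

lemma Wpoly_mul_coeff_eq_zero (c : ℕ → K) (n : ℕ) (q : K[X]) (m : ℕ)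
    (h : q.natDegree + n ≤ m) : (Wpoly c n * q).coeff m = 0 := by
  rw [Wpoly_coeff_mul]
  refine Finset.sum_eq_zero fun i hi => ?_
  simp only [Finset.mem_range] at hi
  split_ifs with h1
  · rw [coeff_eq_zero_of_natDegree_lt (by omega), mul_zero]
  · rw [mul_zero]

lemma Wpoly_coeff_ge (c : ℕ → K) (n m : ℕ) (h : n ≤ m) : (Wpoly c n).coeff m = 0 := by
  rw [Wpoly, finset_sum_coeff]
  refine Finset.sum_eq_zero fun i hi => ?_
  simp only [Finset.mem_range] at hi
  rw [coeff_C_mul, coeff_X_pow, if_neg (by omega), mul_zero]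

/-- Core identity: row combinations of the Sylvester matrix compute coefficients of
`U·ā + V·b̄` (with columns read in reverse order). -/
lemma sylv_identity (φ : ℤ →+* K) (a b : Polynomial ℤ) (c : ℕ → K) (j : ℕ)
    (hj : j < a.natDegree + b.natDegree) :
    ∑ i ∈ Finset.range (a.natDegree + b.natDegree), c i * φ (sylvEntry a b i j)
      = (Wpoly c b.natDegree * a.map φ
          + Wpoly (fun t => c (b.natDegree + t)) a.natDegree * b.map φ).coeff
          (a.natDegree + b.natDegree - 1 - j) := by
  set na := a.natDegree with hna
  set nb := b.natDegree with hnb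
  rw [coeff_add, Wpoly_coeff_mul, Wpoly_coeff_mul]
  rw [show na + nb = nb + na by omega] at hj ⊢
  rw [Finset.sum_range_add]
  congr 1
  · refine Finset.sum_congr rfl fun i hi => ?_
    simp only [Finset.mem_range] at hi
    congr 1
    rw [sylvEntry, if_pos hi, apply_ite φ, map_zero]
    split_ifs with h1 h2 h2
    · rw [← coeff_map]; congr 1; omega
    · exfalso; omega
    · refine (coeff_eq_zero_of_natDegree_lt ?_).symm
      have hle : (a.map φ).natDegree ≤ a.natDegree := natDegree_map_le
      omega
    · rfl
  · refine Finset.sum_congr rfl fun t ht => ?_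
    simp only [Finset.mem_range] at ht
    congr 1
    rw [sylvEntry, if_neg (by omega)]
    rw [show nb + t - nb = t by omega, apply_ite φ, map_zero]
    split_ifs with h1 h2 h2
    · rw [← coeff_map]; congr 1; omega
    · exfalso; omega
    · refine (coeff_eq_zero_of_natDegree_lt ?_).symm
      have hle : (b.map φ).natDegree ≤ b.natDegree := natDegree_map_le
      omega
    · rfl

lemma vecMul_sylv (φ : ℤ →+* K) (a b : Polynomial ℤ)
    (c : Fin (a.natDegree + b.natDegree) → K) (j : Fin (a.natDegree + b.natDegree)) :
    (Matrix.vecMul c ((sylvesterMatrix a b).map φ)) j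
      = ∑ i ∈ Finset.range (a.natDegree + b.natDegree),
          (fun i : ℕ => if h : i < a.natDegree + b.natDegree then c ⟨i, h⟩ else 0) i
            * φ (sylvEntry a b i j) := by
  rw [← Fin.sum_univ_eq_sum_range]
  simp only [Matrix.vecMul, dotProduct, Matrix.map_apply]
  refine Finset.sum_congr rfl fun i _ => ?_
  rw [dif_pos i.isLt]
  congr 1

/-- If the reduction of `a` keeps its leading coefficient and the reductions of `a` and `b`
are coprime, the resultant does not vanish modulo the map. -/
lemma detA (φ : ℤ →+* K) (a b : Polynomial ℤ) (ha : φ a.leadingCoeff ≠ 0)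
    (hcop : IsCoprime (a.map φ) (b.map φ)) : φ (resultantZ a b) ≠ 0 := by
  intro h0
  rw [resultantZ, RingHom.map_det, RingHom.mapMatrix_apply] at h0
  obtain ⟨c, hc0, hcv⟩ := Matrix.exists_vecMul_eq_zero_iff.mpr h0
  let c' : ℕ → K := fun i => if h : i < a.natDegree + b.natDegree then c ⟨i, h⟩ else 0
  have hc'def : ∀ (i : ℕ) (h : i < a.natDegree + b.natDegree), c' i = c ⟨i, h⟩ :=
    fun i h => dif_pos h
  have hamap0 : a.map φ ≠ 0 := by
    intro h
    apply ha
    rw [Polynomial.leadingCoeff, ← coeff_map, h, coeff_zero]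
  have hand : (a.map φ).natDegree = a.natDegree := natDegree_map_of_leadingCoeff_ne_zero φ ha
  have hP : Wpoly c' b.natDegree * a.map φ
      + Wpoly (fun t => c' (b.natDegree + t)) a.natDegree * b.map φ = 0 := by
    ext m
    rw [coeff_zero]
    by_cases hm : m < a.natDegree + b.natDegree
    · have hj : a.natDegree + b.natDegree - 1 - m < a.natDegree + b.natDegree := by omega
      have hid := sylv_identity φ a b c' (a.natDegree + b.natDegree - 1 - m) hj
      rw [show a.natDegree + b.natDegree - 1 - (a.natDegree + b.natDegree - 1 - m) = m
        by omega] at hid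
      rw [← hid]
      have h2 := congrFun hcv ⟨a.natDegree + b.natDegree - 1 - m, hj⟩
      rw [vecMul_sylv] at h2
      exact h2
    · rw [coeff_add, Wpoly_mul_coeff_eq_zero _ _ _ _ (by
        have : (a.map φ).natDegree ≤ a.natDegree := natDegree_map_le
        omega),
        Wpoly_mul_coeff_eq_zero _ _ _ _ (by
        have : (b.map φ).natDegree ≤ b.natDegree := natDegree_map_le
        omega), add_zero]
  have hdvd : a.map φ ∣ Wpoly (fun t => c' (b.natDegree + t)) a.natDegree := by
    refine hcop.dvd_of_dvd_mul_right ⟨-(Wpoly c' b.natDegree), ?_⟩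
    linear_combination hP
  have hVzero : Wpoly (fun t => c' (b.natDegree + t)) a.natDegree = 0 := by
    by_contra hVne
    have h1 : (a.map φ).natDegree
        ≤ (Wpoly (fun t => c' (b.natDegree + t)) a.natDegree).natDegree :=
      natDegree_le_of_dvd hdvd hVne
    have h2 : (Wpoly (fun t => c' (b.natDegree + t)) a.natDegree).natDegree < a.natDegree := by
      by_contra h3
      exact (Polynomial.leadingCoeff_ne_zero.mpr hVne)
        (Wpoly_coeff_ge _ _ _ (by omega))
    omega
  have hUzero : Wpoly c' b.natDegree = 0 := by
    rw [hVzero, zero_mul, add_zero] at hP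
    rcases mul_eq_zero.mp hP with h | h
    · exact h
    · exact absurd h hamap0
  apply hc0
  funext i
  have hlt := i.isLt
  show c i = 0
  rcases Nat.lt_or_ge (i : ℕ) b.natDegree with hi | hi
  · have h1 : c' (i : ℕ) = 0 := by
      rw [← Wpoly_coeff c' b.natDegree (i : ℕ) hi, hUzero, coeff_zero]
    rw [← hc'def (i : ℕ) hlt]
    exact h1
  · have ht : (i : ℕ) - b.natDegree < a.natDegree := by omega
    have h1 : c' (b.natDegree + ((i : ℕ) - b.natDegree)) = 0 := by
      rw [← Wpoly_coeff (fun t => c' (b.natDegree + t)) a.natDegree ((i : ℕ) - b.natDegree) ht,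
        hVzero, coeff_zero]
    rw [hc'def _ (by omega)] at h1
    rw [← h1]
    congr 1
    exact Fin.ext (by simp; omega)

/-- Conversely, a nontrivial low-degree relation `u·ā + v·b̄ = 0` kills the resultant. -/
lemma detC (φ : ℤ →+* K) (a b : Polynomial ℤ) (u v : K[X])
    (hu : u = 0 ∨ u.natDegree < b.natDegree) (hv : v = 0 ∨ v.natDegree < a.natDegree)
    (h0 : u ≠ 0 ∨ v ≠ 0) (heq : u * a.map φ + v * b.map φ = 0) :
    φ (resultantZ a b) = 0 := by
  let c' : ℕ → K := fun i =>
    if i < b.natDegree then u.coeff (b.natDegree - 1 - i)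
    else v.coeff (a.natDegree - 1 - (i - b.natDegree))
  let c : Fin (a.natDegree + b.natDegree) → K := fun i => c' i
  have hc'lt : ∀ i : ℕ, i < b.natDegree → c' i = u.coeff (b.natDegree - 1 - i) :=
    fun i h => if_pos h
  have hc'ge : ∀ i : ℕ, b.natDegree ≤ i →
      c' i = v.coeff (a.natDegree - 1 - (i - b.natDegree)) :=
    fun i h => if_neg (by omega)
  have hUu : Wpoly c' b.natDegree = u := by
    rw [← Wpoly_eq u b.natDegree hu]
    exact Wpoly_congr _ _ _ fun i hi => hc'lt i hi
  have hVv : Wpoly (fun t => c' (b.natDegree + t)) a.natDegree = v := by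
    rw [← Wpoly_eq v a.natDegree hv]
    refine Wpoly_congr _ _ _ fun t ht => ?_
    rw [hc'ge _ (by omega), show b.natDegree + t - b.natDegree = t by omega]
  have hcv : Matrix.vecMul c ((sylvesterMatrix a b).map φ) = 0 := by
    funext j
    rw [vecMul_sylv]
    have h3 : ∑ i ∈ Finset.range (a.natDegree + b.natDegree), c' i * φ (sylvEntry a b i j)
        = 0 := by
      rw [sylv_identity φ a b c' j j.isLt, hUu, hVv, heq, coeff_zero]
    have h4 : ∀ i ∈ Finset.range (a.natDegree + b.natDegree),
        (fun i : ℕ => if h : i < a.natDegree + b.natDegree then c ⟨i, h⟩ else 0) i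
          * φ (sylvEntry a b i j) = c' i * φ (sylvEntry a b i j) := by
      intro i hi
      show (if h : i < a.natDegree + b.natDegree then c ⟨i, h⟩ else 0)
          * φ (sylvEntry a b i j) = c' i * φ (sylvEntry a b i j)
      rw [dif_pos (Finset.mem_range.mp hi)]
    exact (Finset.sum_congr rfl h4).trans h3
  have hc0 : c ≠ 0 := by
    rcases h0 with h | h
    · have hud : u.natDegree < b.natDegree := hu.resolve_left h
      intro hzero
      have h1 := congrFun hzero ⟨b.natDegree - 1 - u.natDegree, by omega⟩
      have h2 : c' (b.natDegree - 1 - u.natDegree) = 0 := h1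
      rw [hc'lt _ (by omega),
        show b.natDegree - 1 - (b.natDegree - 1 - u.natDegree) = u.natDegree by omega] at h2
      exact Polynomial.leadingCoeff_ne_zero.mpr h h2
    · have hvd : v.natDegree < a.natDegree := hv.resolve_left h
      intro hzero
      have h1 := congrFun hzero ⟨b.natDegree + (a.natDegree - 1 - v.natDegree), by omega⟩
      have h2 : c' (b.natDegree + (a.natDegree - 1 - v.natDegree)) = 0 := h1
      rw [hc'ge _ (by omega),
        show b.natDegree + (a.natDegree - 1 - v.natDegree) - b.natDegree
          = a.natDegree - 1 - v.natDegree by omega,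
        show a.natDegree - 1 - (a.natDegree - 1 - v.natDegree) = v.natDegree by omega] at h2
      exact Polynomial.leadingCoeff_ne_zero.mpr h h2
  have hdet : ((sylvesterMatrix a b).map φ).det = 0 :=
    Matrix.exists_vecMul_eq_zero_iff.mp ⟨c, hc0, hcv⟩
  rw [resultantZ, RingHom.map_det, RingHom.mapMatrix_apply]
  exact hdet

/-! ### Lifting and auxiliary lemmas -/

lemma sum_C_mul_X_coeff {R : Type*} [Semiring R] (c : ℕ → R) (n t : ℕ) :
    (∑ m ∈ Finset.range n, C (c m) * X ^ m).coeff t = if t < n then c t else 0 := by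
  rw [finset_sum_coeff]
  by_cases h : t < n
  · rw [if_pos h, Finset.sum_eq_single t]
    · simp
    · intro m hm hne
      rw [coeff_C_mul, coeff_X_pow, if_neg (fun he => hne he.symm), mul_zero]
    · intro h'; exact absurd (Finset.mem_range.mpr h) h'
  · rw [if_neg h]
    refine Finset.sum_eq_zero fun m hm => ?_
    simp only [Finset.mem_range] at hm
    rw [coeff_C_mul, coeff_X_pow, if_neg (by omega), mul_zero]

def liftZ (p : ℕ) (q : Polynomial (ZMod p)) : Polynomial ℤ :=
  ∑ m ∈ Finset.range (q.natDegree + 1), C ((q.coeff m).val : ℤ) * X ^ m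

lemma liftZ_coeff (p : ℕ) (q : Polynomial (ZMod p)) (t : ℕ) :
    (liftZ p q).coeff t = if t < q.natDegree + 1 then ((q.coeff t).val : ℤ) else 0 :=
  sum_C_mul_X_coeff _ _ _

lemma liftZ_map (p : ℕ) [NeZero p] (q : Polynomial (ZMod p)) :
    (liftZ p q).map (Int.castRingHom (ZMod p)) = q := by
  ext t
  rw [coeff_map, liftZ_coeff, apply_ite (Int.castRingHom (ZMod p)), map_zero]
  by_cases h : t < q.natDegree + 1
  · rw [if_pos h]
    show (((q.coeff t).val : ℤ) : ZMod p) = q.coeff t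
    push_cast
    rw [ZMod.natCast_val, ZMod.cast_id]
  · rw [if_neg h, eq_comm]
    exact coeff_eq_zero_of_natDegree_lt (by omega)

lemma liftZ_natDegree_le (p : ℕ) (q : Polynomial (ZMod p)) :
    (liftZ p q).natDegree ≤ q.natDegree := by
  rw [natDegree_le_iff_coeff_eq_zero]
  intro t ht
  rw [liftZ_coeff, if_neg (by omega)]

lemma liftZ_natDegree (p : ℕ) [NeZero p] (q : Polynomial (ZMod p)) :
    (liftZ p q).natDegree = q.natDegree := by
  refine le_antisymm (liftZ_natDegree_le p q) ?_
  have h : ((liftZ p q).map (Int.castRingHom (ZMod p))).natDegree ≤ (liftZ p q).natDegree :=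
    natDegree_map_le
  rwa [liftZ_map] at h

lemma liftZ_zero (p : ℕ) : liftZ p 0 = 0 := by
  ext t
  rw [liftZ_coeff]
  split_ifs with h
  · simp
  · rfl

lemma eq_C_p_mul (p : ℕ) (q : Polynomial ℤ)
    (h : q.map (Int.castRingHom (ZMod p)) = 0) : ∃ r, q = C (p : ℤ) * r := by
  refine ⟨∑ m ∈ Finset.range (q.natDegree + 1), C (q.coeff m / (p : ℤ)) * X ^ m, ?_⟩
  have hdvd : ∀ m, (p : ℤ) ∣ q.coeff m := by
    intro m
    rw [← ZMod.intCast_zmod_eq_zero_iff_dvd]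
    have := congrArg (fun r => Polynomial.coeff r m) h
    simpa [coeff_map] using this
  conv_lhs => rw [q.as_sum_range' (q.natDegree + 1) (lt_add_one _)]
  rw [Finset.mul_sum]
  refine Finset.sum_congr rfl fun m _ => ?_
  rw [← mul_assoc, ← C_mul, Int.mul_ediv_cancel' (hdvd m), C_mul_X_pow_eq_monomial]

lemma prod_add_sq {R : Type*} [CommRing R] {ι : Type*} [DecidableEq ι]
    (x y : ι → R) (w : R) (s : Finset ι) :
    ∃ E, ∏ j ∈ s, (x j + w * y j)
      = ∏ j ∈ s, x j + w * (∑ j ∈ s, y j * ∏ l ∈ s.erase j, x l) + w ^ 2 * E := by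
  classical
  refine Finset.induction_on s ⟨0, by simp⟩ ?_
  rintro a s ha ⟨E, hE⟩
  · refine ⟨x a * E + y a * (∑ j ∈ s, y j * ∏ l ∈ s.erase j, x l) + w * (y a * E), ?_⟩
    rw [Finset.prod_insert ha, Finset.prod_insert ha, hE, Finset.sum_insert ha,
      Finset.erase_insert ha]
    have hs : ∑ j ∈ s, y j * ∏ l ∈ (insert a s).erase j, x l
        = x a * ∑ j ∈ s, y j * ∏ l ∈ s.erase j, x l := by
      rw [Finset.mul_sum]
      refine Finset.sum_congr rfl fun j hj => ?_
      rw [Finset.erase_insert_of_ne (by rintro rfl; exact ha hj),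
        Finset.prod_insert (fun hmem => ha (Finset.mem_of_mem_erase hmem))]
      ring
    rw [hs]
    ring

lemma isCoprime_of_not_dvd (p : ℕ) (hp : p.Prime) (r : ℤ) (h : ¬ (p : ℤ) ∣ r) :
    IsCoprime r (p : ℤ) := by
  rw [Int.isCoprime_iff_gcd_eq_one]
  have hnd : ¬ p ∣ r.natAbs := by
    intro hd
    exact h (Int.dvd_natAbs.mp (Int.natCast_dvd_natCast.mpr hd))
  have : Nat.Coprime p r.natAbs := (Nat.Prime.coprime_iff_not_dvd hp).mpr hnd
  simpa [Int.gcd] using this.symm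

end Helpers

/-- Let `p` be a prime and `f ∈ ℤ[x]` monic with `Disc(f)` relatively
prime to `p`. If `f̅ = f_1 ⋯ f_k` in `𝔽_p[x]` with each `f_i` irreducible, then there are
lifts `f̃_i ∈ ℤ[x]` of the `f_i` and `F ∈ ℤ[x]` with `f = f̃_1 ⋯ f̃_k + p·F` such that
`Res(f̃_i, F)` is relatively prime to `p` for every `i`. -/
theorem exists_good_lifts (p : ℕ) [hp : Fact p.Prime] (f : Polynomial ℤ) (hf : f.Monic)
    (hdisc : IsCoprime (discZ f) (p : ℤ))
    (k : ℕ) (g : Fin k → Polynomial (ZMod p)) (hgirr : ∀ i, Irreducible (g i))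
    (hfact : f.map (Int.castRingHom (ZMod p)) = ∏ i, g i) :
    ∃ (gt : Fin k → Polynomial ℤ) (F : Polynomial ℤ),
      (∀ i, (gt i).map (Int.castRingHom (ZMod p)) = g i) ∧
      f = (∏ i, gt i) + (p : Polynomial ℤ) * F ∧
      ∀ i, IsCoprime (resultantZ (gt i) F) (p : ℤ) := by
  classical
  have hpprime := hp.out
  haveI : NeZero p := ⟨hpprime.ne_zero⟩
  set φ := Int.castRingHom (ZMod p) with hφ
  have hφp : φ (p : ℤ) = 0 := by
    show ((p : ℤ) : ZMod p) = 0
    rw [ZMod.intCast_zmod_eq_zero_iff_dvd]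
  have hp0 : (p : ℤ) ≠ 0 := Int.natCast_ne_zero.mpr hpprime.ne_zero
  have hCp0 : (C (p : ℤ)) ≠ 0 := fun h => hp0 (by simpa using congrArg (fun q => q.coeff 0) h)
  -- Step 1: the reduction of f is separable
  have hsep : (f.map φ).Separable := by
    by_cases hn : f.natDegree = 0
    · have h1 : f = 1 := (Polynomial.Monic.natDegree_eq_zero hf).mp hn
      rw [h1, Polynomial.map_one]
      exact Polynomial.separable_one
    · by_contra hns
      have hfb0 : f.map φ ≠ 0 := (hf.map φ).ne_zero
      have hres : φ (resultantZ f (derivative f)) = 0 := by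
        by_cases hd0 : derivative (f.map φ) = 0
        · refine detC φ f (derivative f) 0 1 (Or.inl rfl)
            (Or.inr (by rw [natDegree_one]; omega)) (Or.inr one_ne_zero) ?_
          rw [zero_mul, zero_add, one_mul, ← derivative_map, hd0]
        · have hdu : ¬ IsUnit (EuclideanDomain.gcd (f.map φ) (derivative (f.map φ))) :=
            fun h => hns (EuclideanDomain.gcd_isUnit_iff.mp h)
          obtain ⟨v', hv'⟩ := EuclideanDomain.gcd_dvd_left (f.map φ) (derivative (f.map φ))
          obtain ⟨u', hu'⟩ := EuclideanDomain.gcd_dvd_right (f.map φ) (derivative (f.map φ))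
          set d := EuclideanDomain.gcd (f.map φ) (derivative (f.map φ)) with hdd
          have hd0' : d ≠ 0 := fun h => hfb0 (by rw [hv', h, zero_mul])
          have hv'0 : v' ≠ 0 := fun h => hfb0 (by rw [hv', h, mul_zero])
          have hddeg : 1 ≤ d.natDegree := by
            by_contra hle
            refine hdu (Polynomial.isUnit_iff_degree_eq_zero.mpr ?_)
            rw [degree_eq_natDegree hd0', show d.natDegree = 0 by omega, Nat.cast_zero]
          have hfbdeg : (f.map φ).natDegree = f.natDegree := hf.natDegree_map φ
          have hmulv := natDegree_mul hd0' hv'0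
          rw [← hv'] at hmulv
          refine detC φ f (derivative f) (-u') v' ?_ (Or.inr (by omega)) (Or.inr hv'0) ?_
          · by_cases h : u' = 0
            · exact Or.inl (by rw [h, neg_zero])
            · right
              rw [natDegree_neg]
              have h1 := natDegree_mul hd0' h
              rw [← hu'] at h1
              have h2 : (derivative (f.map φ)).natDegree ≤ (derivative f).natDegree := by
                rw [derivative_map]
                exact natDegree_map_le
              have h3 : d.natDegree ≤ (derivative (f.map φ)).natDegree :=
                natDegree_le_of_dvd ⟨u', hu'⟩ hd0
              omega
          · have e2 : (derivative f).map φ = d * u' := by rw [← derivative_map]; exact hu'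
            rw [e2, hv']
            ring
      have hpd : (p : ℤ) ∣ resultantZ f (derivative f) :=
        (ZMod.intCast_zmod_eq_zero_iff_dvd _ p).mp hres
      have hpd2 : (p : ℤ) ∣ discZ f := by
        rw [discZ]
        exact Dvd.dvd.mul_left hpd _
      have hunit := hdisc.isUnit_of_dvd' hpd2 dvd_rfl
      rw [Int.isUnit_iff] at hunit
      have := hpprime.two_le
      omega
  -- Step 2: basic facts about the irreducible factors
  have hg0 : ∀ i, g i ≠ 0 := fun i => (hgirr i).ne_zero
  have hcopr : ∀ i, IsCoprime (g i) (∏ j ∈ Finset.univ.erase i, g j) := by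
    intro i
    have hmul : g i * ∏ j ∈ Finset.univ.erase i, g j = ∏ j, g j :=
      Finset.mul_prod_erase _ _ (Finset.mem_univ i)
    have hs : ((g i) * ∏ j ∈ Finset.univ.erase i, g j).Separable := by
      rw [hmul, ← hfact]; exact hsep
    exact hs.isCoprime
  choose α β hαβ using hcopr
  -- Step 3: lifts and the first remainder F0
  let a : Fin k → Polynomial ℤ := fun i => liftZ p (g i)
  have hamap : ∀ i, (a i).map φ = g i := fun i => liftZ_map p (g i)
  obtain ⟨F0, hF0⟩ := eq_C_p_mul p (f - ∏ i, a i) (by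
    rw [Polynomial.map_sub, Polynomial.map_prod, hfact]
    rw [Finset.prod_congr rfl fun i _ => hamap i, sub_self])
  -- Step 4: correction terms
  have hmon : ∀ i, ((g i) * C ((g i).leadingCoeff)⁻¹).Monic :=
    fun i => monic_mul_leadingCoeff_inv (hg0 i)
  let hh : Fin k → Polynomial (ZMod p) := fun i =>
    (β i * (F0.map φ - 1)) %ₘ ((g i) * C ((g i).leadingCoeff)⁻¹)
  let H : Fin k → Polynomial ℤ := fun i => liftZ p (hh i)
  let gtf : Fin k → Polynomial ℤ := fun i => a i + C (p : ℤ) * H i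
  have hgtmap : ∀ i, (gtf i).map φ = g i := by
    intro i
    show (a i + C (p : ℤ) * H i).map φ = g i
    rw [Polynomial.map_add, Polynomial.map_mul, map_C, hφp, C_0, zero_mul, add_zero, hamap]
  obtain ⟨F, hF⟩ := eq_C_p_mul p (f - ∏ i, gtf i) (by
    rw [Polynomial.map_sub, Polynomial.map_prod, hfact]
    rw [Finset.prod_congr rfl fun i _ => hgtmap i, sub_self])
  refine ⟨gtf, F, hgtmap, ?_, ?_⟩
  · rw [show (p : Polynomial ℤ) = C (p : ℤ) from (Polynomial.C_eq_natCast p).symm]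
    linear_combination hF
  -- Step 5: the resultant condition
  intro i
  -- compute the reduction of F
  obtain ⟨E, hE⟩ := prod_add_sq a H (C (p : ℤ)) Finset.univ
  have hFeq : F = F0 - (∑ j, H j * ∏ l ∈ Finset.univ.erase j, a l) - C (p : ℤ) * E := by
    refine mul_left_cancel₀ hCp0 ?_
    rw [← hF, show (∏ j, gtf j) = ∏ j, (a j + C (p : ℤ) * H j) from rfl, hE]
    linear_combination hF0
  have hFb : F.map φ = F0.map φ - (∑ j, (hh j) * ∏ l ∈ Finset.univ.erase j, g l) := by
    rw [hFeq, Polynomial.map_sub, Polynomial.map_sub, Polynomial.map_mul, map_C, hφp, C_0,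
      zero_mul, sub_zero]
    congr 1
    rw [Polynomial.map_sum]
    refine Finset.sum_congr rfl fun j _ => ?_
    rw [Polynomial.map_mul, Polynomial.map_prod]
    congr 1
    · exact liftZ_map p (hh j)
    · exact Finset.prod_congr rfl fun l _ => hamap l
  have hsplit : ∃ Rr, ∑ j, (hh j) * ∏ l ∈ Finset.univ.erase j, g l
      = hh i * ∏ l ∈ Finset.univ.erase i, g l + g i * Rr := by
    have hdvd2 : g i ∣ ∑ j ∈ Finset.univ.erase i, (hh j) * ∏ l ∈ Finset.univ.erase j, g l := by
      refine Finset.dvd_sum fun j hj => ?_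
      have hij : j ≠ i := (Finset.mem_erase.mp hj).1
      exact Dvd.dvd.mul_left
        (Finset.dvd_prod_of_mem _ (Finset.mem_erase.mpr ⟨fun h => hij h.symm, Finset.mem_univ i⟩))
        _
    obtain ⟨Rr, hRr⟩ := hdvd2
    exact ⟨Rr, by rw [← Finset.add_sum_erase _ _ (Finset.mem_univ i), hRr]⟩
  obtain ⟨Rr, hRr⟩ := hsplit
  have hmod : ∃ w, hh i = β i * (F0.map φ - 1) - g i * w := by
    have hmd := modByMonic_add_div (β i * (F0.map φ - 1)) ((g i) * C ((g i).leadingCoeff)⁻¹)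
    refine ⟨C ((g i).leadingCoeff)⁻¹
      * ((β i * (F0.map φ - 1)) /ₘ ((g i) * C ((g i).leadingCoeff)⁻¹)), ?_⟩
    show (β i * (F0.map φ - 1)) %ₘ ((g i) * C ((g i).leadingCoeff)⁻¹)
      = β i * (F0.map φ - 1) - g i * _
    linear_combination hmd
  obtain ⟨w, hw⟩ := hmod
  have hfinal : F.map φ = 1 + g i
      * ((F0.map φ - 1) * α i + w * ∏ l ∈ Finset.univ.erase i, g l - Rr) := by
    rw [hFb, hRr, hw]
    linear_combination (-(F0.map φ - 1)) * (hαβ i)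
  -- leading coefficient of gtf i survives reduction
  have hai0 : a i ≠ 0 := fun h => hg0 i (by rw [← hamap i, h, Polynomial.map_zero])
  have haideg : (a i).natDegree = (g i).natDegree := liftZ_natDegree p (g i)
  have hlc : (gtf i).leadingCoeff = (a i).leadingCoeff := by
    have hHd : H i = 0 ∨ (H i).natDegree < (a i).natDegree := by
      by_cases h : hh i = 0
      · left
        show liftZ p (hh i) = 0
        rw [h, liftZ_zero]
      · right
        have h1 : (H i).natDegree ≤ (hh i).natDegree := liftZ_natDegree_le p (hh i)
        have h2 : (hh i).degree < ((g i) * C ((g i).leadingCoeff)⁻¹).degree :=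
          degree_modByMonic_lt _ (hmon i)
        have h3 : (hh i).natDegree < ((g i) * C ((g i).leadingCoeff)⁻¹).natDegree :=
          natDegree_lt_natDegree h h2
        have h4 : ((g i) * C ((g i).leadingCoeff)⁻¹).natDegree = (g i).natDegree := by
          rw [natDegree_mul (hg0 i)
            (fun hc => (inv_ne_zero (leadingCoeff_ne_zero.mpr (hg0 i)))
              (by simpa using congrArg (fun q => q.coeff 0) hc)),
            natDegree_C, add_zero]
        omega
    rcases hHd with h | h
    · show (a i + C (p : ℤ) * H i).leadingCoeff = (a i).leadingCoeff
      rw [h, mul_zero, add_zero]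
    · show (a i + C (p : ℤ) * H i).leadingCoeff = (a i).leadingCoeff
      rw [add_comm]
      refine leadingCoeff_add_of_degree_lt ?_
      calc (C (p : ℤ) * H i).degree = (H i).degree := degree_C_mul hp0
        _ < (a i).degree := degree_lt_degree h
  apply isCoprime_of_not_dvd p hpprime
  intro hdvd
  refine absurd ((ZMod.intCast_zmod_eq_zero_iff_dvd _ p).mpr hdvd) (detA φ (gtf i) F ?_ ?_)
  · rw [hlc]
    have hval : φ ((a i).leadingCoeff) = (g i).leadingCoeff := by
      rw [Polynomial.leadingCoeff, ← coeff_map, hamap i, haideg]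
      rfl
    rw [hval]
    exact leadingCoeff_ne_zero.mpr (hg0 i)
  · rw [hgtmap i]
    exact ⟨-((F0.map φ - 1) * α i + w * ∏ l ∈ Finset.univ.erase i, g l - Rr), 1, by
      rw [hfinal]; ring⟩
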